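/- arXiv:2205.06583 — 2 statements merged into one kernel-verified Lean document; each statement's English description precedes it below -/
import Mathlib

section
/- If V : Δ(Θ) → ℝ is convex, then the map μ ↦ E[V(μ(s)) | μ] = Σ_s α_s(μ) V(μ(s)) is convex in μ, where α_s(μ) = Σ_θ μ_θ f_θ(s) is the probability of signal s under belief μ and μ(s) is the Bayesian posterior (defined when α_s(μ) > 0). -/
open Finset

noncomputable def post {Θ S : Type*} [Fintype Θ] (f : Θ → S → ℝ) (μ : Θ → ℝ) (s : S) :
    Θ → ℝ :=
  fun θ => μ θ * f θ s / (∑ θ', μ θ' * f θ' s)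

/-- The signal probability `α_s(μ) = Σ_θ μ_θ f_θ(s)`. -/
def sigProb {Θ : Type*} [Fintype Θ] (f : Θ → S → ℝ) (μ : Θ → ℝ) (s : S) : ℝ :=
  ∑ θ, μ θ * f θ s

noncomputable def Eexp {Θ S : Type*} [Fintype Θ] [Fintype S] (f : Θ → S → ℝ)
    (V : (Θ → ℝ) → ℝ) (μ : Θ → ℝ) : ℝ :=
  ∑ s, sigProb f μ s * V (post f μ s)

lemma sig_nonneg {Θ S : Type*} [Fintype Θ] (f : Θ → S → ℝ) (hf : ∀ θ s, 0 ≤ f θ s)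
    {μ : Θ → ℝ} (hμ : μ ∈ stdSimplex ℝ Θ) (s : S) : 0 ≤ sigProb f μ s :=
  Finset.sum_nonneg fun θ _ => mul_nonneg (hμ.1 θ) (hf θ s)

lemma term_zero {Θ S : Type*} [Fintype Θ] (f : Θ → S → ℝ) (hf : ∀ θ s, 0 ≤ f θ s)
    {μ : Θ → ℝ} (hμ : μ ∈ stdSimplex ℝ Θ) {s : S} (h : sigProb f μ s = 0) (θ : Θ) :
    μ θ * f θ s = 0 := by
  have := (Finset.sum_eq_zero_iff_of_nonneg
    (fun θ _ => mul_nonneg (hμ.1 θ) (hf θ s))).mp h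
  exact this θ (Finset.mem_univ θ)

lemma post_mem {Θ S : Type*} [Fintype Θ] (f : Θ → S → ℝ) (hf : ∀ θ s, 0 ≤ f θ s)
    {μ : Θ → ℝ} (hμ : μ ∈ stdSimplex ℝ Θ) {s : S} (h : 0 < sigProb f μ s) :
    post f μ s ∈ stdSimplex ℝ Θ := by
  constructor
  · intro θ
    exact div_nonneg (mul_nonneg (hμ.1 θ) (hf θ s)) (sig_nonneg f hf hμ s)
  · simp only [post]
    rw [← Finset.sum_div]
    exact div_self h.ne'

/-- if `V` is convex on the simplex, then the expected value of `V` at the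
Bayesian posterior, `μ ↦ Σ_s α_s(μ) V(μ(s))` (terms with `α_s(μ) = 0` contributing `0`),
is convex in the belief `μ` on the simplex. -/
theorem expected_posterior_value_convex {Θ S : Type*} [Fintype Θ] [Fintype S]
    (f : Θ → S → ℝ) (hf : ∀ θ s, 0 ≤ f θ s) (hfsum : ∀ θ, ∑ s, f θ s = 1)
    (V : (Θ → ℝ) → ℝ) (hV : ConvexOn ℝ (stdSimplex ℝ Θ) V) :
    ConvexOn ℝ (stdSimplex ℝ Θ) (Eexp f V) := by
  refine ⟨convex_stdSimplex ℝ Θ, ?_⟩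
  intro x hx y hy a b ha hb hab
  have key : ∀ s : S,
      sigProb f (a • x + b • y) s * V (post f (a • x + b • y) s) ≤
      a * (sigProb f x s * V (post f x s)) + b * (sigProb f y s * V (post f y s)) := by
    intro s
    set αx := sigProb f x s with hαx
    set αy := sigProb f y s with hαy
    have hαx0 : 0 ≤ αx := sig_nonneg f hf hx s
    have hαy0 : 0 ≤ αy := sig_nonneg f hf hy s
    have hmix : sigProb f (a • x + b • y) s = a * αx + b * αy := by
      simp only [sigProb, hαx, hαy, Pi.add_apply, Pi.smul_apply, smul_eq_mul,
        Finset.mul_sum]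
      rw [← Finset.sum_add_distrib]
      congr 1; ext θ; ring
    by_cases hz : a * αx + b * αy = 0
    · have h1 : a * αx = 0 := by
        nlinarith [mul_nonneg ha hαx0, mul_nonneg hb hαy0]
      have h2 : b * αy = 0 := by
        nlinarith [mul_nonneg ha hαx0, mul_nonneg hb hαy0]
      have e1 : a * (αx * V (post f x s)) = 0 := by
        rw [← mul_assoc, h1, zero_mul]
      have e2 : b * (αy * V (post f y s)) = 0 := by
        rw [← mul_assoc, h2, zero_mul]
      rw [hmix, hz, zero_mul, e1, e2, add_zero]
    · have hpos : 0 < a * αx + b * αy :=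
        lt_of_le_of_ne (by positivity) (Ne.symm hz)
      have hpostmix : post f (a • x + b • y) s =
          (a * αx / (a * αx + b * αy)) • post f x s +
          (b * αy / (a * αx + b * αy)) • post f y s := by
        funext θ
        have hmix' := hmix
        simp only [sigProb, Pi.add_apply, Pi.smul_apply, smul_eq_mul] at hmix'
        simp only [post, Pi.add_apply, Pi.smul_apply, smul_eq_mul]
        rw [hmix']
        rw [show (∑ θ' : Θ, x θ' * f θ' s) = αx from rfl,
          show (∑ θ' : Θ, y θ' * f θ' s) = αy from rfl]
        have hx' : a * (x θ * f θ s) = (a * αx) * (x θ * f θ s / αx) := by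
          rcases eq_or_lt_of_le hαx0 with h0 | h0
          · rw [term_zero f hf hx (s := s) h0.symm θ]; simp
          · field_simp
        have hy' : b * (y θ * f θ s) = (b * αy) * (y θ * f θ s / αy) := by
          rcases eq_or_lt_of_le hαy0 with h0 | h0
          · rw [term_zero f hf hy (s := s) h0.symm θ]; simp
          · field_simp
        rw [div_mul_eq_mul_div, div_mul_eq_mul_div, ← hx', ← hy', ← add_div]
        congr 1
        ring
      rw [hmix, hpostmix]
      rcases eq_or_lt_of_le hαx0 with h0x | h0x
      · have hax : a * αx = 0 := by rw [← h0x, mul_zero]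
        have hsum : a * αx + b * αy = b * αy := by rw [hax, zero_add]
        have hby0 : b * αy ≠ 0 := by rw [← hsum]; exact hz
        rw [hsum, hax, zero_div, zero_smul, zero_add, div_self hby0, one_smul, ← h0x]
        exact le_of_eq (by ring)
      rcases eq_or_lt_of_le hαy0 with h0y | h0y
      · have hby : b * αy = 0 := by rw [← h0y, mul_zero]
        have hsum : a * αx + b * αy = a * αx := by rw [hby, add_zero]
        have hax0 : a * αx ≠ 0 := by rw [← hsum]; exact hz
        rw [hsum, hby, zero_div, zero_smul, add_zero, div_self hax0, one_smul, ← h0y]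
        exact le_of_eq (by ring)
      · have hVle := hV.2 (post_mem f hf hx h0x) (post_mem f hf hy h0y)
          (show (0:ℝ) ≤ a * αx / (a * αx + b * αy) from
            div_nonneg (mul_nonneg ha hαx0) hpos.le)
          (show (0:ℝ) ≤ b * αy / (a * αx + b * αy) from
            div_nonneg (mul_nonneg hb hαy0) hpos.le)
          (by rw [← add_div, div_self hz])
        simp only [smul_eq_mul] at hVle
        calc (a * αx + b * αy) *
            V ((a * αx / (a * αx + b * αy)) • post f x s +
               (b * αy / (a * αx + b * αy)) • post f y s)
            ≤ (a * αx + b * αy) *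
              (a * αx / (a * αx + b * αy) * V (post f x s) +
               b * αy / (a * αx + b * αy) * V (post f y s)) :=
              mul_le_mul_of_nonneg_left hVle hpos.le
          _ = a * (αx * V (post f x s)) + b * (αy * V (post f y s)) := by
              field_simp
  calc Eexp f V (a • x + b • y)
      = ∑ s, sigProb f (a • x + b • y) s * V (post f (a • x + b • y) s) := rfl
    _ ≤ ∑ s, (a * (sigProb f x s * V (post f x s)) + b * (sigProb f y s * V (post f y s))) :=
        Finset.sum_le_sum fun s _ => key s
    _ = a • Eexp f V x + b • Eexp f V y := by
        rw [Finset.sum_add_distrib, ← Finset.mul_sum, ← Finset.mul_sum]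
        simp [Eexp, smul_eq_mul]
end

section
/- The upfront fee scheme is optimal: for any fee scheme c under which the DM strictly prefers acquiring information (V_0^N(μ_0; c) > π(μ_0)), the discounted expected total fee ρ(μ_0; c) is strictly less than φ(μ_0) := V_0^N(μ_0; 0) − π(μ_0). Hence sup over all acceptable fee schemes of ρ(μ_0;c) equals φ(μ_0), achieved by charging the single upfront fee φ(μ_0). -/
open Finset

namespace StoppingFee

variable {Θ Sig : Type*} [Fintype Θ] [Fintype Sig]

/-- Bayesian posterior after signal `s`. -/
noncomputable def post (f : Θ → Sig → ℝ) (μ : Θ → ℝ) (s : Sig) : Θ → ℝ :=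
  fun θ => μ θ * f θ s / (∑ θ', μ θ' * f θ' s)

/-- Probability of signal `s` under belief `μ`. -/
def sigProb (f : Θ → Sig → ℝ) (μ : Θ → ℝ) (s : Sig) : ℝ :=
  ∑ θ, μ θ * f θ s

/-- Value functions under the history-dependent fee scheme `c`, indexed by the number `k`
of remaining periods, the current history `h` of signals, and the current belief `μ`:
`V_n^N(μ; h_n; c)` with `k = N − n`.  Continuing costs, in expectation, the discounted fee
attached to next period's history. -/
noncomputable def valC (f : Θ → Sig → ℝ) (π : (Θ → ℝ) → ℝ) (δ : ℝ) (c : List Sig → ℝ) :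
    ℕ → List Sig → (Θ → ℝ) → ℝ
  | 0, _, μ => π μ
  | (k + 1), h, μ => max (π μ)
      (δ * ((∑ s, sigProb f μ s * valC f π δ c k (h ++ [s]) (post f μ s)) -
            ∑ s, sigProb f μ s * c (h ++ [s])))

open Classical in
/-- Discounted expected total fee paid under the `c`-optimal strategy (which stops at a
history exactly when the value there equals the stopping payoff). -/
noncomputable def rhoC (f : Θ → Sig → ℝ) (π : (Θ → ℝ) → ℝ) (δ : ℝ) (c : List Sig → ℝ) :
    ℕ → List Sig → (Θ → ℝ) → ℝ
  | 0, _, _ => 0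
  | (k + 1), h, μ =>
      if valC f π δ c (k + 1) h μ = π μ then 0
      else δ * ∑ s, sigProb f μ s *
        (c (h ++ [s]) + rhoC f π δ c k (h ++ [s]) (post f μ s))

open Classical in
/-- Discounted expected *gross* payoff of the `c`-optimal strategy when all fees are set
to zero (the strategy is the one optimal for `c`, but no fees are paid). -/
noncomputable def grossC (f : Θ → Sig → ℝ) (π : (Θ → ℝ) → ℝ) (δ : ℝ) (c : List Sig → ℝ) :
    ℕ → List Sig → (Θ → ℝ) → ℝ
  | 0, _, μ => π μ
  | (k + 1), h, μ =>
      if valC f π δ c (k + 1) h μ = π μ then π μ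
      else δ * ∑ s, sigProb f μ s * grossC f π δ c k (h ++ [s]) (post f μ s)

/-- Period-0 value with horizon `k + 1`: continuing also requires paying the upfront fee
`c ∅` immediately. -/
noncomputable def val0 (f : Θ → Sig → ℝ) (π : (Θ → ℝ) → ℝ) (δ : ℝ) (c : List Sig → ℝ)
    (k : ℕ) (μ : Θ → ℝ) : ℝ :=
  max (π μ)
    (δ * ((∑ s, sigProb f μ s * valC f π δ c k [s] (post f μ s)) -
          ∑ s, sigProb f μ s * c [s]) - c [])

open Classical in
/-- Period-0 discounted expected total fee under the `c`-optimal strategy. -/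
noncomputable def rho0 (f : Θ → Sig → ℝ) (π : (Θ → ℝ) → ℝ) (δ : ℝ) (c : List Sig → ℝ)
    (k : ℕ) (μ : Θ → ℝ) : ℝ :=
  if val0 f π δ c k μ = π μ then 0
  else c [] + δ * ∑ s, sigProb f μ s * (c [s] + rhoC f π δ c k [s] (post f μ s))

open Classical in
/-- Period-0 discounted expected gross payoff of the `c`-optimal strategy with zero fees. -/
noncomputable def gross0 (f : Θ → Sig → ℝ) (π : (Θ → ℝ) → ℝ) (δ : ℝ) (c : List Sig → ℝ)
    (k : ℕ) (μ : Θ → ℝ) : ℝ :=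
  if val0 f π δ c k μ = π μ then π μ
  else δ * ∑ s, sigProb f μ s * grossC f π δ c k [s] (post f μ s)


section Aux

variable (f : Θ → Sig → ℝ) (π : (Θ → ℝ) → ℝ) (δ : ℝ) (c : List Sig → ℝ)

lemma sigProb_nonneg' (hf : ∀ θ s, 0 ≤ f θ s) {μ : Θ → ℝ} (hμ : ∀ θ, 0 ≤ μ θ) (s : Sig) :
    0 ≤ sigProb f μ s :=
  Finset.sum_nonneg fun θ _ => mul_nonneg (hμ θ) (hf θ s)

lemma post_nonneg' (hf : ∀ θ s, 0 ≤ f θ s) {μ : Θ → ℝ} (hμ : ∀ θ, 0 ≤ μ θ) (s : Sig) (θ : Θ) :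
    0 ≤ post f μ s θ :=
  div_nonneg (mul_nonneg (hμ θ) (hf θ s))
    (Finset.sum_nonneg fun θ' _ => mul_nonneg (hμ θ') (hf θ' s))

/-- Decomposition: value = gross payoff minus fees, under the `c`-optimal strategy. -/
lemma valC_decomp : ∀ (k : ℕ) (h : List Sig) (μ : Θ → ℝ),
    valC f π δ c k h μ = grossC f π δ c k h μ - rhoC f π δ c k h μ
  | 0, h, μ => by simp [valC, grossC, rhoC]
  | (k+1), h, μ => by
      by_cases hst : valC f π δ c (k+1) h μ = π μ
      · rw [grossC, rhoC, if_pos hst, if_pos hst, hst]; ring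
      · rw [grossC, rhoC, if_neg hst, if_neg hst]
        have key : valC f π δ c (k+1) h μ = max (π μ)
            (δ * ((∑ s, sigProb f μ s * valC f π δ c k (h ++ [s]) (post f μ s)) -
              ∑ s, sigProb f μ s * c (h ++ [s]))) := by rw [valC]
        rw [key] at hst ⊢
        rw [(max_choice _ _).resolve_left hst]
        have hv : ∀ s : Sig, valC f π δ c k (h ++ [s]) (post f μ s) =
            grossC f π δ c k (h ++ [s]) (post f μ s) -
            rhoC f π δ c k (h ++ [s]) (post f μ s) := fun s => valC_decomp k _ _
        simp only [hv, mul_sub, mul_add, Finset.sum_sub_distrib, Finset.sum_add_distrib]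
        ring

lemma val0_decomp (k : ℕ) (μ : Θ → ℝ) :
    val0 f π δ c k μ = gross0 f π δ c k μ - rho0 f π δ c k μ := by
  rw [gross0, rho0]
  split_ifs with hst
  · rw [hst]; ring
  · rw [val0] at hst ⊢
    rw [(max_choice _ _).resolve_left hst]
    have hv : ∀ s : Sig, valC f π δ c k [s] (post f μ s) =
        grossC f π δ c k [s] (post f μ s) - rhoC f π δ c k [s] (post f μ s) :=
      fun s => valC_decomp f π δ c k _ _
    simp only [hv, mul_sub, mul_add, Finset.sum_sub_distrib, Finset.sum_add_distrib]
    ring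

/-- The gross payoff of any strategy is at most the zero-fee value. -/
lemma grossC_le (hf : ∀ θ s, 0 ≤ f θ s) (hδ0 : 0 ≤ δ) :
    ∀ (k : ℕ) (h : List Sig) (μ : Θ → ℝ), (∀ θ, 0 ≤ μ θ) →
      grossC f π δ c k h μ ≤ valC f π δ (fun _ => 0) k h μ
  | 0, h, μ, _ => by simp [valC, grossC]
  | (k+1), h, μ, hμ => by
      rw [grossC, valC]
      split_ifs with hst
      · exact le_max_left _ _
      · refine le_trans ?_ (le_max_right _ _)
        simp only [mul_zero, Finset.sum_const_zero, sub_zero]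
        refine mul_le_mul_of_nonneg_left (Finset.sum_le_sum fun s _ => ?_) hδ0
        exact mul_le_mul_of_nonneg_left
          (grossC_le hf hδ0 k (h ++ [s]) (post f μ s) (post_nonneg' f hf hμ s))
          (sigProb_nonneg' f hf hμ s)

lemma gross0_le (hf : ∀ θ s, 0 ≤ f θ s) (hδ0 : 0 ≤ δ) (k : ℕ) (μ : Θ → ℝ)
    (hμ : ∀ θ, 0 ≤ μ θ) :
    gross0 f π δ c k μ ≤ val0 f π δ (fun _ => 0) k μ := by
  rw [gross0, val0]
  split_ifs with hst
  · exact le_max_left _ _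
  · refine le_trans ?_ (le_max_right _ _)
    simp only [mul_zero, Finset.sum_const_zero, sub_zero]
    refine mul_le_mul_of_nonneg_left (Finset.sum_le_sum fun s _ => ?_) hδ0
    exact mul_le_mul_of_nonneg_left
      (grossC_le f π δ c hf hδ0 k [s] (post f μ s) (post_nonneg' f hf hμ s))
      (sigProb_nonneg' f hf hμ s)

/-- If fees vanish on nonempty histories, continuation values agree with the zero-fee ones. -/
lemma valC_eq_zero_fee (hc : ∀ h : List Sig, h ≠ [] → c h = 0) :
    ∀ (k : ℕ) (h : List Sig) (μ : Θ → ℝ),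
      valC f π δ c k h μ = valC f π δ (fun _ => 0) k h μ
  | 0, h, μ => by simp [valC]
  | (k+1), h, μ => by
      rw [valC, valC]
      have h1 : ∀ s : Sig, c (h ++ [s]) = 0 := fun s => hc _ (by simp)
      have h2 : ∀ s : Sig, valC f π δ c k (h ++ [s]) (post f μ s) =
          valC f π δ (fun _ => 0) k (h ++ [s]) (post f μ s) :=
        fun s => valC_eq_zero_fee hc k _ _
      simp only [h1, h2]

/-- If fees vanish on nonempty histories, no fees are paid after period 0. -/
lemma rhoC_eq_zero (hc : ∀ h : List Sig, h ≠ [] → c h = 0) :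
    ∀ (k : ℕ) (h : List Sig) (μ : Θ → ℝ), rhoC f π δ c k h μ = 0
  | 0, _, _ => by simp [rhoC]
  | (k+1), h, μ => by
      rw [rhoC]
      split_ifs with hst
      · rfl
      · have h1 : ∀ s : Sig, c (h ++ [s]) = 0 := fun s => hc _ (by simp)
        have h2 : ∀ s : Sig, rhoC f π δ c k (h ++ [s]) (post f μ s) = 0 :=
          fun s => rhoC_eq_zero hc k _ _
        simp [h1, h2]

end Aux

/-- Theorem 1: optimality of the upfront fee scheme. For every
nonnegative fee scheme `c` under which the DM strictly prefers acquiring information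
(`V_0^N(μ_0; c) > π(μ_0)`), the discounted expected total fee is strictly less than
`φ(μ_0) := V_0^N(μ_0; 0) − π(μ_0)`; hence the supremum of `ρ(μ_0; c)` over all such
acceptable fee schemes equals `φ(μ_0)`, achieved by charging a single upfront fee. -/
theorem upfront_fee_optimal (f : Θ → Sig → ℝ)
    (hf : ∀ θ s, 0 ≤ f θ s) (hfsum : ∀ θ, ∑ s, f θ s = 1)
    (π : (Θ → ℝ) → ℝ) (δ : ℝ) (hδ0 : 0 < δ) (hδ1 : δ ≤ 1)
    (μ0 : Θ → ℝ) (hμ0 : μ0 ∈ stdSimplex ℝ Θ) (k : ℕ)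
    (hnontrivial : π μ0 < val0 f π δ (fun _ => 0) k μ0) :
    (∀ c : List Sig → ℝ, (∀ h, 0 ≤ c h) → π μ0 < val0 f π δ c k μ0 →
      rho0 f π δ c k μ0 < val0 f π δ (fun _ => 0) k μ0 - π μ0) ∧
    IsLUB {r : ℝ | ∃ c : List Sig → ℝ, (∀ h, 0 ≤ c h) ∧
        π μ0 < val0 f π δ c k μ0 ∧ r = rho0 f π δ c k μ0}
      (val0 f π δ (fun _ => 0) k μ0 - π μ0) := by
  classical
  have hμ0' : ∀ θ, 0 ≤ μ0 θ := fun θ => hμ0.1 θ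
  -- Part 1
  have part1 : ∀ c : List Sig → ℝ, (∀ h, 0 ≤ c h) → π μ0 < val0 f π δ c k μ0 →
      rho0 f π δ c k μ0 < val0 f π δ (fun _ => 0) k μ0 - π μ0 := by
    intro c _ hacc
    have hdec := val0_decomp f π δ c k μ0
    have hle := gross0_le f π δ c hf hδ0.le k μ0 hμ0'
    linarith
  refine ⟨part1, ?_, ?_⟩
  · rintro r ⟨c, hc, hacc, rfl⟩
    exact (part1 c hc hacc).le
  · intro b hb
    by_contra hbl
    push_neg at hbl
    set φ : ℝ := val0 f π δ (fun _ => 0) k μ0 - π μ0 with hφ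
    have hφpos : 0 < φ := by simp only [hφ]; linarith
    set t : ℝ := (max b 0 + φ) / 2 with ht
    have hmaxlt : max b 0 < φ := max_lt hbl hφpos
    have ht0 : 0 ≤ t := by
      have : (0:ℝ) ≤ max b 0 := le_max_right _ _
      simp only [ht]; linarith
    have htφ : t < φ := by simp only [ht]; linarith
    have htb : b < t := by
      have : b ≤ max b 0 := le_max_left _ _
      simp only [ht]; linarith
    -- the upfront fee scheme charging `t`
    set ct : List Sig → ℝ := fun h => if h = [] then t else 0 with hct
    have hct0 : ∀ h : List Sig, h ≠ [] → ct h = 0 := by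
      intro h hh; simp [hct, hh]
    have hctnn : ∀ h, 0 ≤ ct h := by
      intro h; simp only [hct]; split_ifs <;> simp [ht0]
    -- value under ct
    have hval0z : val0 f π δ (fun _ => 0) k μ0 = max (π μ0)
        (δ * (∑ s, sigProb f μ0 s * valC f π δ (fun _ => 0) k [s] (post f μ0 s))) := by
      rw [val0]; simp
    have hX : π μ0 <
        δ * (∑ s, sigProb f μ0 s * valC f π δ (fun _ => 0) k [s] (post f μ0 s)) := by
      by_contra hX
      push_neg at hX
      rw [hval0z, max_eq_left hX] at hnontrivial
      exact lt_irrefl _ hnontrivial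
    have hvz : val0 f π δ (fun _ => 0) k μ0 =
        δ * (∑ s, sigProb f μ0 s * valC f π δ (fun _ => 0) k [s] (post f μ0 s)) := by
      rw [hval0z, max_eq_right hX.le]
    have hvct : val0 f π δ ct k μ0 = max (π μ0)
        (δ * (∑ s, sigProb f μ0 s * valC f π δ (fun _ => 0) k [s] (post f μ0 s)) - t) := by
      rw [val0]
      have h1 : ∀ s : Sig, ct [s] = 0 := fun s => hct0 _ (by simp)
      have h2 : ct [] = t := by simp [hct]
      have h3 : ∀ s : Sig, valC f π δ ct k [s] (post f μ0 s) =
          valC f π δ (fun _ => 0) k [s] (post f μ0 s) :=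
        fun s => valC_eq_zero_fee f π δ ct hct0 k _ _
      simp only [h1, h2, h3, mul_zero, Finset.sum_const_zero, sub_zero]
    have hvctval : val0 f π δ ct k μ0 =
        δ * (∑ s, sigProb f μ0 s * valC f π δ (fun _ => 0) k [s] (post f μ0 s)) - t := by
      rw [hvct]; refine max_eq_right ?_
      have : π μ0 < δ * (∑ s, sigProb f μ0 s *
          valC f π δ (fun _ => 0) k [s] (post f μ0 s)) - t := by
        have := htφ; rw [hφ, hvz] at this; linarith
      exact this.le
    have hacc : π μ0 < val0 f π δ ct k μ0 := by
      rw [hvctval]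
      have := htφ; rw [hφ, hvz] at this; linarith
    have hrho : rho0 f π δ ct k μ0 = t := by
      rw [rho0, if_neg hacc.ne']
      have h1 : ∀ s : Sig, ct [s] = 0 := fun s => hct0 _ (by simp)
      have h2 : ct [] = t := by simp [hct]
      have h3 : ∀ s : Sig, rhoC f π δ ct k [s] (post f μ0 s) = 0 :=
        fun s => rhoC_eq_zero f π δ ct hct0 k _ _
      simp [h1, h2, h3]
    have : t ≤ b := hb ⟨ct, hctnn, hacc, hrho.symm⟩
    linarith

end StoppingFee
end
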